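/- For every real x, the Euler polynomial matrix 𝓔(x + 1/2) and its inverse can be factorized by summation matrices as 𝓔(x + 1/2) = G_n[x]·G_{n−1}[x]·⋯·G_1[x]·𝔈 and [𝓔(x + 1/2)]^{−1} = 𝓓·G_n[−x]·G_{n−1}[−x]·⋯·G_1[−x]. In particular, 𝓔 = G_n[−1/2]·⋯·G_1[−1/2]·𝔈 and 𝓔^{−1} = 𝓓·G_n[1/2]·⋯·G_1[1/2]. -/

import Mathlib

noncomputable section

/-- `Eu x k` is the Euler polynomial `E_k(x)`, characterized by the generating function
`(2/(e^z+1)) e^{xz} = Σ_k E_k(x) z^k / k!` for `|z| < π`. -/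
def IsEulerFamily (Eu : ℝ → ℕ → ℝ) : Prop :=
  ∀ x z : ℝ, |z| < Real.pi →
    HasSum (fun k : ℕ => Eu x k * z ^ k / (Nat.factorial k : ℝ))
      (2 / (Real.exp z + 1) * Real.exp (x * z))

/-- The `(n+1)×(n+1)` Euler polynomial matrix `𝓔(x)`, with `(i,j)` entry
`C(i,j) E_{i-j}(x)` (which is `0` for `j > i` since then `C(i,j) = 0`). -/
def eulerMatrix (Eu : ℝ → ℕ → ℝ) (n : ℕ) (x : ℝ) :
    Matrix (Fin (n + 1)) (Fin (n + 1)) ℝ :=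
  Matrix.of fun i j => (Nat.choose (i : ℕ) (j : ℕ) : ℝ) * Eu x ((i : ℕ) - (j : ℕ))

/-- The generalized Pascal matrix of the first kind `P[x]`. -/
def pascalMatrix (n : ℕ) (x : ℝ) : Matrix (Fin (n + 1)) (Fin (n + 1)) ℝ :=
  Matrix.of fun i j => (Nat.choose (i : ℕ) (j : ℕ) : ℝ) * x ^ ((i : ℕ) - (j : ℕ))

/-- The matrix `𝓓`, with `(i,j)` entry `(1+(-1)^(i-j)) C(i,j) 2^(j-i-1)`
(which is `0` for `j > i` since then `C(i,j) = 0`). -/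
def Dmatrix (n : ℕ) : Matrix (Fin (n + 1)) (Fin (n + 1)) ℝ :=
  Matrix.of fun i j =>
    (1 + (-1 : ℝ) ^ ((i : ℤ) - (j : ℤ))) * (Nat.choose (i : ℕ) (j : ℕ) : ℝ) *
      (2 : ℝ) ^ ((j : ℤ) - (i : ℤ) - 1)

/-- The summation matrix `G_k[x]` of order `n+1`: the block diagonal matrix
`diag(I_{n-k}, S_k[x])`, where `S_k[x]` is the `(k+1)×(k+1)` lower triangular matrix with
`(i,j)` entry `x^(i-j)` for `i ≥ j`.  (For `k = n` this is just `S_n[x]`.) -/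
def Gmatrix (n k : ℕ) (x : ℝ) : Matrix (Fin (n + 1)) (Fin (n + 1)) ℝ :=
  Matrix.of fun i j =>
    if n - k ≤ (i : ℕ) ∧ n - k ≤ (j : ℕ) then
      (if (j : ℕ) ≤ (i : ℕ) then x ^ ((i : ℕ) - (j : ℕ)) else 0)
    else (if i = j then 1 else 0)

/-- The ordered product `G_n[x] · G_{n-1}[x] · ⋯ · G_1[x]`. -/
def Gprod (n : ℕ) (x : ℝ) : Matrix (Fin (n + 1)) (Fin (n + 1)) ℝ :=
  (List.ofFn fun m : Fin n => Gmatrix n (n - (m : ℕ)) x).prod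

namespace EulerFact

open Finset

/-- binomial convolution of sequences -/
def conv (a b : ℕ → ℝ) : ℕ → ℝ :=
  fun m => ∑ j ∈ Finset.range (m + 1), (Nat.choose m j : ℝ) * a j * b (m - j)

lemma conv_comm (a b : ℕ → ℝ) : conv a b = conv b a := by
  funext m
  rw [conv, conv, ← Finset.sum_range_reflect]
  refine Finset.sum_congr rfl fun j hj => ?_
  rw [Finset.mem_range, Nat.lt_succ_iff] at hj
  have h1 : m + 1 - 1 - j = m - j := by omega
  have h2 : m - (m - j) = j := by omega
  rw [h1, h2, Nat.choose_symm hj]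
  ring

/-- matrix attached to a sequence -/
def Mseq (n : ℕ) (a : ℕ → ℝ) : Matrix (Fin (n + 1)) (Fin (n + 1)) ℝ :=
  Matrix.of fun i j => (Nat.choose (i : ℕ) (j : ℕ) : ℝ) * a ((i : ℕ) - (j : ℕ))

lemma conv_mul_nat (a b : ℕ → ℝ) (n i l : ℕ) (hi : i ≤ n) :
    ∑ t ∈ Finset.range (n + 1),
      (Nat.choose i t : ℝ) * a (i - t) * ((Nat.choose t l : ℝ) * b (t - l))
      = (Nat.choose i l : ℝ) * conv b a (i - l) := by
  by_cases hl : l ≤ i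
  · have key : ∀ t ∈ Finset.range (n + 1),
        (Nat.choose i t : ℝ) * a (i - t) * ((Nat.choose t l : ℝ) * b (t - l))
          = if t ∈ Finset.Icc l i then
              (Nat.choose i l : ℝ) * ((Nat.choose (i - l) (t - l) : ℝ) * b (t - l) * a (i - t))
            else 0 := by
      intro t _
      by_cases ht : t ∈ Finset.Icc l i
      · rw [if_pos ht]
        rw [Finset.mem_Icc] at ht
        have hc := Nat.choose_mul (n := i) ht.1
        have hc' : (Nat.choose i t : ℝ) * (Nat.choose t l : ℝ)
            = (Nat.choose i l : ℝ) * (Nat.choose (i - l) (t - l) : ℝ) := by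
          exact_mod_cast congrArg (Nat.cast (R := ℝ)) hc
        linear_combination (a (i - t) * b (t - l)) * hc'
      · rw [if_neg ht]
        rw [Finset.mem_Icc] at ht
        rcases Nat.lt_or_ge t l with h | h
        · rw [Nat.choose_eq_zero_of_lt h]; ring
        · have : i < t := by omega
          rw [Nat.choose_eq_zero_of_lt this]; ring
    rw [Finset.sum_congr rfl key, Finset.sum_ite_mem]
    have hinter : Finset.range (n + 1) ∩ Finset.Icc l i = Finset.Icc l i := by
      apply Finset.inter_eq_right.mpr
      intro t ht
      rw [Finset.mem_Icc] at ht
      rw [Finset.mem_range]; omega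
    rw [hinter]
    have hmap : Finset.Icc l i
        = (Finset.range (i - l + 1)).map ⟨fun m => m + l, add_left_injective l⟩ := by
      ext t
      simp only [Finset.mem_Icc, Finset.mem_map, Finset.mem_range, Function.Embedding.coeFn_mk]
      constructor
      · intro h; exact ⟨t - l, by omega, by omega⟩
      · rintro ⟨m, hm, rfl⟩; omega
    rw [hmap, Finset.sum_map]
    simp only [Function.Embedding.coeFn_mk, Nat.add_sub_cancel]
    rw [conv, Finset.mul_sum]
    refine Finset.sum_congr rfl fun m hm => ?_
    rw [Finset.mem_range] at hm
    have h1 : i - (m + l) = i - l - m := by omega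
    rw [h1]
  · push_neg at hl
    have hz : ∑ t ∈ Finset.range (n + 1),
        (Nat.choose i t : ℝ) * a (i - t) * ((Nat.choose t l : ℝ) * b (t - l)) = 0 := by
      refine Finset.sum_eq_zero fun t ht => ?_
      rcases Nat.lt_or_ge t l with h | h
      · rw [Nat.choose_eq_zero_of_lt h]; ring
      · have : i < t := by omega
        rw [Nat.choose_eq_zero_of_lt this]; ring
    rw [hz, Nat.choose_eq_zero_of_lt hl]
    norm_num

lemma Mseq_mul (n : ℕ) (a b : ℕ → ℝ) : Mseq n a * Mseq n b = Mseq n (conv a b) := by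
  ext i l
  rw [Matrix.mul_apply]
  simp only [Mseq, Matrix.of_apply]
  rw [Fin.sum_univ_eq_sum_range
    (fun t => (Nat.choose (i : ℕ) t : ℝ) * a ((i : ℕ) - t)
      * ((Nat.choose t (l : ℕ) : ℝ) * b (t - (l : ℕ)))) (n + 1)]
  rw [conv_mul_nat a b n i l i.is_le, conv_comm]

def deltaSeq : ℕ → ℝ := fun m => if m = 0 then 1 else 0

lemma Mseq_delta (n : ℕ) : Mseq n deltaSeq = 1 := by
  ext i j
  simp only [Mseq, Matrix.of_apply, Matrix.one_apply, deltaSeq]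
  rcases eq_or_ne i j with h | h
  · subst h; simp
  · rw [if_neg h]
    by_cases hij : (i : ℕ) - (j : ℕ) = 0
    · have : (i : ℕ) < (j : ℕ) := by
        rcases Nat.lt_or_ge (i : ℕ) (j : ℕ) with h' | h'
        · exact h'
        · exact absurd (Fin.ext (by omega)) h
      rw [Nat.choose_eq_zero_of_lt this]; ring
    · rw [if_neg hij]; ring


def gent (n k : ℕ) (x : ℝ) (i j : ℕ) : ℝ :=
  if n - k ≤ i ∧ n - k ≤ j then (if j ≤ i then x ^ (i - j) else 0)
  else (if i = j then 1 else 0)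

def bpent (n k : ℕ) (x : ℝ) (i j : ℕ) : ℝ :=
  if n - k ≤ i ∧ n - k ≤ j then
    (if j ≤ i then (Nat.choose (i - (n - k)) (j - (n - k)) : ℝ) * x ^ (i - j) else 0)
  else (if i = j then 1 else 0)

def BP (n k : ℕ) (x : ℝ) : Matrix (Fin (n + 1)) (Fin (n + 1)) ℝ :=
  Matrix.of fun i j => bpent n k x (i : ℕ) (j : ℕ)

lemma Gmatrix_ent (n k : ℕ) (x : ℝ) (i j : Fin (n + 1)) :
    Gmatrix n k x i j = gent n k x (i : ℕ) (j : ℕ) := by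
  simp only [Gmatrix, gent, Matrix.of_apply, Fin.ext_iff]

lemma BP_zero (n : ℕ) (x : ℝ) : BP n 0 x = 1 := by
  ext i j
  simp only [BP, bpent, Matrix.of_apply, Matrix.one_apply, Nat.sub_zero]
  by_cases h : n ≤ (i : ℕ) ∧ n ≤ (j : ℕ)
  · have hi : (i : ℕ) = n := le_antisymm i.is_le h.1
    have hj : (j : ℕ) = n := le_antisymm j.is_le h.2
    have hij : i = j := Fin.ext (by omega)
    rw [if_pos h, if_pos (by omega), if_pos hij, hi, hj]
    simp
  · rw [if_neg h, if_congr (Fin.ext_iff (a := i) (b := j)) rfl rfl]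

lemma BP_top (n : ℕ) (x : ℝ) : BP n n x = pascalMatrix n x := by
  ext i j
  simp only [BP, bpent, Matrix.of_apply, pascalMatrix, Nat.sub_self]
  rw [if_pos ⟨Nat.zero_le _, Nat.zero_le _⟩]
  by_cases h : (j : ℕ) ≤ (i : ℕ)
  · rw [if_pos h, Nat.sub_zero, Nat.sub_zero]
  · rw [if_neg h, Nat.choose_eq_zero_of_lt (by omega)]
    norm_num

lemma step_nat (n k : ℕ) (hk : k < n) (x : ℝ) (i j : ℕ) (hi : i ≤ n) (hj : j ≤ n) :
    ∑ t ∈ Finset.range (n + 1), gent n (k + 1) x i t * bpent n k x t j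
      = bpent n (k + 1) x i j := by
  have hs : n - k = n - (k + 1) + 1 := by omega
  by_cases hia : n - (k + 1) ≤ i
  · by_cases hja : n - (k + 1) ≤ j
    · rcases Nat.lt_or_ge (n - (k + 1)) j with haj | haj
      · -- n-(k+1) + 1 ≤ j
        by_cases hji : j ≤ i
        · -- main case
          have key : ∀ t ∈ Finset.range (n + 1),
              gent n (k + 1) x i t * bpent n k x t j
                = if t ∈ Finset.Icc j i then
                    (Nat.choose (t - (n - (k + 1) + 1)) (j - (n - (k + 1) + 1)) : ℝ) * x ^ (i - j) else 0 := by
            intro t _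
            by_cases ht : t ∈ Finset.Icc j i
            · rw [if_pos ht]
              rw [Finset.mem_Icc] at ht
              have h1 : gent n (k + 1) x i t = x ^ (i - t) := by
                rw [gent, if_pos ⟨hia, by omega⟩, if_pos ht.2]
              have h2 : bpent n k x t j
                  = (Nat.choose (t - (n - (k + 1) + 1)) (j - (n - (k + 1) + 1)) : ℝ) * x ^ (t - j) := by
                rw [bpent, hs, if_pos ⟨by omega, by omega⟩, if_pos ht.1]
              rw [h1, h2]
              have h3 : x ^ (t - j) * x ^ (i - t) = x ^ (i - j) := by
                rw [← pow_add]; congr 1; omega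
              rw [mul_comm (x ^ (i - t)), mul_assoc, h3]
            · rw [if_neg ht]
              rw [Finset.mem_Icc, not_and_or] at ht
              rcases ht with h | h
              · push_neg at h
                have : bpent n k x t j = 0 := by
                  rw [bpent, hs]
                  by_cases h' : n - (k + 1) + 1 ≤ t ∧ n - (k + 1) + 1 ≤ j
                  · rw [if_pos h', if_neg (by omega)]
                  · rw [if_neg h', if_neg (by omega)]
                rw [this]; ring
              · push_neg at h
                have : gent n (k + 1) x i t = 0 := by
                  rw [gent, if_pos ⟨hia, by omega⟩, if_neg (by omega)]
                rw [this]; ring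
          rw [Finset.sum_congr rfl key, Finset.sum_ite_mem]
          have hinter : Finset.range (n + 1) ∩ Finset.Icc j i = Finset.Icc j i := by
            apply Finset.inter_eq_right.mpr
            intro t ht
            rw [Finset.mem_Icc] at ht
            rw [Finset.mem_range]; omega
          rw [hinter]
          have hmap : Finset.Icc j i
              = (Finset.Icc (j - (n - (k + 1) + 1)) (i - (n - (k + 1) + 1))).map
                  ⟨fun m => m + (n - (k + 1) + 1), add_left_injective _⟩ := by
            ext t
            simp only [Finset.mem_Icc, Finset.mem_map, Function.Embedding.coeFn_mk]
            constructor
            · intro h; exact ⟨t - (n - (k + 1) + 1), by omega, by omega⟩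
            · rintro ⟨m, hm, rfl⟩; omega
          rw [hmap, Finset.sum_map]
          simp only [Function.Embedding.coeFn_mk, Nat.add_sub_cancel]
          rw [← Finset.sum_mul, ← Nat.cast_sum, Nat.sum_Icc_choose]
          have hfix : (i - (n - (k + 1) + 1) + 1).choose (j - (n - (k + 1) + 1) + 1)
              = (i - (n - (k + 1))).choose (j - (n - (k + 1))) := by
            congr 1 <;> omega
          rw [hfix, bpent, if_pos ⟨hia, hja⟩, if_pos hji]
        · -- i < j : both sides 0
          have hz : ∀ t ∈ Finset.range (n + 1),
              gent n (k + 1) x i t * bpent n k x t j = 0 := by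
            intro t _
            by_cases hti : t ≤ i
            · have : bpent n k x t j = 0 := by
                rw [bpent, hs]
                by_cases h' : n - (k + 1) + 1 ≤ t ∧ n - (k + 1) + 1 ≤ j
                · rw [if_pos h', if_neg (by omega)]
                · rw [if_neg h', if_neg (by omega)]
              rw [this]; ring
            · have : gent n (k + 1) x i t = 0 := by
                rw [gent, if_pos ⟨hia, by omega⟩, if_neg (by omega)]
              rw [this]; ring
          rw [Finset.sum_eq_zero hz, bpent, if_pos ⟨hia, hja⟩, if_neg hji]
      · -- j = n - (k+1)
        have key : ∀ t ∈ Finset.range (n + 1), t ≠ j →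
            gent n (k + 1) x i t * bpent n k x t j = 0 := by
          intro t _ htj
          have : bpent n k x t j = 0 := by
            rw [bpent, hs, if_neg (by omega), if_neg htj]
          rw [this]; ring
        rw [Finset.sum_eq_single_of_mem j (Finset.mem_range.mpr (by omega)) key]
        have h1 : gent n (k + 1) x i j = x ^ (i - j) := by
          rw [gent, if_pos ⟨hia, hja⟩, if_pos (by omega)]
        have h2 : bpent n k x j j = 1 := by
          rw [bpent, hs, if_neg (by omega), if_pos rfl]
        have hd : j - (n - (k + 1)) = 0 := by omega
        rw [h1, h2, bpent, if_pos ⟨hia, hja⟩, if_pos (by omega), hd, Nat.choose_zero_right]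
        norm_num
    · -- j < a : both sides 0
      have hz : ∀ t ∈ Finset.range (n + 1),
          gent n (k + 1) x i t * bpent n k x t j = 0 := by
        intro t _
        by_cases hta : n - (k + 1) ≤ t
        · have : bpent n k x t j = 0 := by
            rw [bpent, hs, if_neg (by omega), if_neg (by omega)]
          rw [this]; ring
        · have : gent n (k + 1) x i t = 0 := by
            rw [gent, if_neg (by omega), if_neg (by omega)]
          rw [this]; ring
      rw [Finset.sum_eq_zero hz, bpent, if_neg (by omega), if_neg (by omega)]
  · -- i < n-(k+1) : row of identity
    have key : ∀ t ∈ Finset.range (n + 1), t ≠ i →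
        gent n (k + 1) x i t * bpent n k x t j = 0 := by
      intro t _ hti
      have : gent n (k + 1) x i t = 0 := by
        rw [gent, if_neg (by omega), if_neg (by omega)]
      rw [this]; ring
    rw [Finset.sum_eq_single_of_mem i (Finset.mem_range.mpr (by omega)) key]
    have h1 : gent n (k + 1) x i i = 1 := by
      rw [gent, if_neg (by omega), if_pos rfl]
    rw [h1, one_mul]
    have e1 : bpent n k x i j = (if i = j then (1:ℝ) else 0) := by
      rw [bpent]; exact if_neg (by omega)
    have e2 : bpent n (k + 1) x i j = (if i = j then (1:ℝ) else 0) := by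
      rw [bpent]; exact if_neg (by omega)
    rw [e1, e2]

lemma step (n k : ℕ) (hk : k < n) (x : ℝ) :
    Gmatrix n (k + 1) x * BP n k x = BP n (k + 1) x := by
  ext i j
  rw [Matrix.mul_apply]
  simp only [Gmatrix_ent, BP, Matrix.of_apply]
  rw [Fin.sum_univ_eq_sum_range
    (fun t => gent n (k + 1) x (i : ℕ) t * bpent n k x t (j : ℕ)) (n + 1)]
  exact step_nat n k hk x (i : ℕ) (j : ℕ) i.is_le j.is_le

lemma Gprod_eq_pascal (n : ℕ) (x : ℝ) : Gprod n x = pascalMatrix n x := by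
  have main : ∀ k, k ≤ n →
      (List.ofFn fun m : Fin k => Gmatrix n (k - (m : ℕ)) x).prod = BP n k x := by
    intro k
    induction k with
    | zero => intro _; simpa using (BP_zero n x).symm
    | succ k ih =>
      intro hk
      rw [List.ofFn_succ, List.prod_cons]
      have htail : (fun m : Fin k => Gmatrix n (k + 1 - ((m.succ : Fin (k + 1)) : ℕ)) x)
          = fun m : Fin k => Gmatrix n (k - (m : ℕ)) x := by
        funext m
        simp [Fin.val_succ]
      rw [htail, ih (by omega)]
      simpa using step n k (by omega) x
  rw [Gprod, main n le_rfl, BP_top]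


def dseq : ℕ → ℝ := fun m => (1 + (-1 : ℝ) ^ m) / 2 ^ (m + 1)

lemma hasSum_exp_real (z : ℝ) :
    HasSum (fun k : ℕ => z ^ k / (Nat.factorial k : ℝ)) (Real.exp z) := by
  have h := NormedSpace.exp_series_hasSum_exp' (𝕂 := ℝ) z
  rw [Real.exp_eq_exp_ℝ]
  simpa [smul_eq_mul, div_eq_inv_mul] using h

/-- the formal power series with coefficients `a k / k!` -/
def pSeries (a : ℕ → ℝ) : FormalMultilinearSeries ℝ ℝ ℝ :=
  fun k => (a k / (Nat.factorial k : ℝ)) • ContinuousMultilinearMap.mkPiAlgebraFin ℝ k ℝ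

lemma pSeries_apply (a : ℕ → ℝ) (k : ℕ) (y : ℝ) :
    (pSeries a k) (fun _ => y) = a k * y ^ k / (Nat.factorial k : ℝ) := by
  simp only [pSeries, ContinuousMultilinearMap.smul_apply,
    ContinuousMultilinearMap.mkPiAlgebraFin_apply, List.ofFn_const, List.prod_replicate,
    smul_eq_mul]
  ring

lemma pSeries_norm (a : ℕ → ℝ) (k : ℕ) :
    ‖pSeries a k‖ = |a k| / (Nat.factorial k : ℝ) := by
  have h1 : ‖(a k / (Nat.factorial k : ℝ)) • ContinuousMultilinearMap.mkPiAlgebraFin ℝ k ℝ‖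
      = ‖a k / (Nat.factorial k : ℝ)‖ * ‖ContinuousMultilinearMap.mkPiAlgebraFin ℝ k ℝ‖ :=
    norm_smul (β := ContinuousMultilinearMap ℝ (fun _ : Fin k => ℝ) ℝ) _ _
  rw [pSeries, h1, ContinuousMultilinearMap.norm_mkPiAlgebraFin, mul_one,
    Real.norm_eq_abs, abs_div, abs_of_nonneg (by positivity : (0:ℝ) ≤ (Nat.factorial k : ℝ))]

lemma coeff_unique {a b : ℕ → ℝ} {f : ℝ → ℝ}
    (ha : ∀ z : ℝ, |z| < 1 → HasSum (fun k => a k * z ^ k / (Nat.factorial k : ℝ)) (f z))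
    (hb : ∀ z : ℝ, |z| < 1 → HasSum (fun k => b k * z ^ k / (Nat.factorial k : ℝ)) (f z)) :
    a = b := by
  have key : ∀ c : ℕ → ℝ,
      (∀ z : ℝ, |z| < 1 → HasSum (fun k => c k * z ^ k / (Nat.factorial k : ℝ)) (f z)) →
      HasFPowerSeriesAt f (pSeries c) 0 := by
    intro c hc
    refine ⟨((1 : NNReal) / 2 : NNReal), ?_, ?_, ?_⟩
    · -- radius bound
      apply FormalMultilinearSeries.le_radius_of_tendsto (l := 0)
      have h := (hc (1 / 2) (by rw [abs_of_pos (by norm_num : (0:ℝ) < 1/2)]; norm_num)).summable.tendsto_atTop_zero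
      have h' := h.abs
      rw [abs_zero] at h'
      convert h' using 2 with k
      rw [pSeries_norm]
      rw [abs_div, abs_mul, abs_pow, abs_of_nonneg (by positivity : (0:ℝ) ≤ (Nat.factorial k : ℝ))]
      push_cast
      rw [abs_of_nonneg (by norm_num : (0:ℝ) ≤ (1:ℝ)/2)]
      ring
    · norm_num
    · intro y hy
      rw [EMetric.mem_ball, edist_zero_right] at hy
      have hy' : |y| < 1 := by
        have : ‖y‖₊ < (1 : NNReal) / 2 := by exact_mod_cast hy
        have : ‖y‖ < 1 / 2 := by exact_mod_cast this
        rw [Real.norm_eq_abs] at this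
        linarith
      have := hc y hy'
      rw [zero_add]
      convert this using 1
      · rfl
      funext k
      rw [pSeries_apply]
  have h := (key a ha).eq_formalMultilinearSeries (key b hb)
  funext k
  have h2 := congrArg (fun T => T k (fun _ => (1 : ℝ))) h
  simp only [pSeries_apply] at h2
  have hfac : (Nat.factorial k : ℝ) ≠ 0 := by positivity
  field_simp at h2
  simpa using h2

set_option maxHeartbeats 1000000 in
/-- absolute summability of a power series known to converge on a larger disc -/
lemma summable_norm_aux {a : ℕ → ℝ} {g : ℝ → ℝ}
    (ha : ∀ z : ℝ, |z| < Real.pi → HasSum (fun k => a k * z ^ k / (Nat.factorial k : ℝ)) (g z))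
    (z : ℝ) (hz : |z| < 1) :
    Summable (fun k => ‖a k * z ^ k / (Nat.factorial k : ℝ)‖) := by
  have h2 : |(2 : ℝ)| < Real.pi := by
    rw [abs_of_nonneg (by norm_num : (0:ℝ) ≤ 2)]
    have := Real.pi_gt_three; linarith
  have ht := ((ha 2 h2).summable.tendsto_atTop_zero).abs
  rw [abs_zero] at ht
  obtain ⟨C, hC⟩ := ht.bddAbove_range
  have hC' : ∀ k, |a k * 2 ^ k / (Nat.factorial k : ℝ)| ≤ C := by
    intro k; exact hC (Set.mem_range_self k)
  have hgeo : Summable (fun k : ℕ => C * (|z| / 2) ^ k) := by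
    apply Summable.mul_left
    apply summable_geometric_of_lt_one (by positivity)
    rw [div_lt_one (by norm_num : (0:ℝ) < 2)]
    linarith
  have hle : ∀ k : ℕ, ‖a k * z ^ k / (Nat.factorial k : ℝ)‖ ≤ C * (|z| / 2) ^ k := by
    intro k
    have hfac : (0:ℝ) < (Nat.factorial k : ℝ) := by positivity
    have heq : ‖a k * z ^ k / (Nat.factorial k : ℝ)‖
        = |a k * 2 ^ k / (Nat.factorial k : ℝ)| * (|z| / 2) ^ k := by
      rw [Real.norm_eq_abs, abs_div, abs_mul, abs_pow, abs_div, abs_mul, abs_pow,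
        abs_of_pos hfac, abs_of_nonneg (by norm_num : (0:ℝ) ≤ 2), div_pow]
      field_simp
    rw [heq]
    have hp : (0:ℝ) ≤ (|z| / 2) ^ k := by positivity
    exact mul_le_mul_of_nonneg_right (hC' k) hp
  exact Summable.of_nonneg_of_le (fun k => norm_nonneg _) hle hgeo

lemma hasSum_conv {a b : ℕ → ℝ} {A B : ℝ} (z : ℝ)
    (ha : HasSum (fun k => a k * z ^ k / (Nat.factorial k : ℝ)) A)
    (hb : HasSum (fun k => b k * z ^ k / (Nat.factorial k : ℝ)) B)
    (ha' : Summable (fun k => ‖a k * z ^ k / (Nat.factorial k : ℝ)‖))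
    (hb' : Summable (fun k => ‖b k * z ^ k / (Nat.factorial k : ℝ)‖)) :
    HasSum (fun m => conv a b m * z ^ m / (Nat.factorial m : ℝ)) (A * B) := by
  set f : ℕ → ℝ := fun k => a k * z ^ k / (Nat.factorial k : ℝ) with hf
  set g : ℕ → ℝ := fun k => b k * z ^ k / (Nat.factorial k : ℝ) with hg
  have hsum : Summable (fun m => ∑ kl ∈ Finset.HasAntidiagonal.antidiagonal m, f kl.1 * g kl.2) :=
    (summable_norm_sum_mul_antidiagonal_of_summable_norm ha' hb').of_norm
  have htsum : ∑' m, (∑ kl ∈ Finset.HasAntidiagonal.antidiagonal m, f kl.1 * g kl.2) = A * B := by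
    rw [← tsum_mul_tsum_eq_tsum_sum_antidiagonal_of_summable_norm ha' hb',
      ha.tsum_eq, hb.tsum_eq]
  have h1 : HasSum (fun m => ∑ kl ∈ Finset.HasAntidiagonal.antidiagonal m, f kl.1 * g kl.2) (A * B) :=
    hsum.hasSum_iff.mpr htsum
  convert h1 using 1
  funext m
  rw [Finset.Nat.sum_antidiagonal_eq_sum_range_succ_mk]
  rw [conv, Finset.sum_mul, Finset.sum_div]
  refine Finset.sum_congr rfl fun j hj => ?_
  rw [Finset.mem_range, Nat.lt_succ_iff] at hj
  simp only [hf, hg]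
  have hzz : z ^ j * z ^ (m - j) = z ^ m := by
    rw [← pow_add]; congr 1; omega
  have hcast : (Nat.choose m j : ℝ)
      = (Nat.factorial m : ℝ) / ((Nat.factorial j : ℝ) * (Nat.factorial (m - j) : ℝ)) :=
    Nat.cast_choose ℝ hj
  have hj0 : (Nat.factorial j : ℝ) ≠ 0 := by positivity
  have hmj0 : (Nat.factorial (m - j) : ℝ) ≠ 0 := by positivity
  have hm0 : (Nat.factorial m : ℝ) ≠ 0 := by positivity
  rw [hcast, ← hzz]
  field_simp

lemma euler_add {Eu : ℝ → ℕ → ℝ} (hEu : IsEulerFamily Eu) (x y : ℝ) :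
    Eu (x + y) = conv (Eu x) (fun t => y ^ t) := by
  have hπ : (1 : ℝ) < Real.pi := by have := Real.pi_gt_three; linarith
  apply coeff_unique (f := fun z => 2 / (Real.exp z + 1) * Real.exp ((x + y) * z))
  · intro z hz
    exact hEu (x + y) z (lt_trans hz hπ)
  · intro z hz
    have ha := hEu x z (lt_trans hz hπ)
    have hb : HasSum (fun k : ℕ => y ^ k * z ^ k / (Nat.factorial k : ℝ))
        (Real.exp (y * z)) := by
      have := hasSum_exp_real (y * z)
      convert this using 1
      funext k
      rw [mul_pow]
    have ha' := summable_norm_aux (fun z' hz' => hEu x z' hz') z hz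
    have hb' : Summable (fun k : ℕ => ‖y ^ k * z ^ k / (Nat.factorial k : ℝ)‖) := by
      have := Real.summable_pow_div_factorial |y * z|
      convert this using 1
      funext k
      rw [Real.norm_eq_abs, abs_div,
        abs_of_nonneg (by positivity : (0:ℝ) ≤ (Nat.factorial k : ℝ)), ← mul_pow, abs_pow]
    have h := hasSum_conv z ha hb ha' hb'
    convert h using 1
    have hxy : (x + y) * z = x * z + y * z := by ring
    rw [hxy, Real.exp_add, mul_assoc]

lemma hasSum_dseq (z : ℝ) :
    HasSum (fun m => dseq m * z ^ m / (Nat.factorial m : ℝ))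
      ((Real.exp (z / 2) + Real.exp (-(z / 2))) / 2) := by
  have h1 := hasSum_exp_real (z / 2)
  have h2 := hasSum_exp_real (-(z / 2))
  have h := (h1.add h2).div_const 2
  convert h using 1
  · rfl
  funext m
  rw [dseq]
  have hneg : (-(z / 2)) ^ m = (-1 : ℝ) ^ m * (z / 2) ^ m := by rw [neg_pow]
  rw [hneg, div_pow]
  have h2m : ((2 : ℝ)) ^ m ≠ 0 := by positivity
  have hm0 : (Nat.factorial m : ℝ) ≠ 0 := by positivity
  field_simp
  ring

lemma summable_norm_dseq (z : ℝ) :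
    Summable (fun m => ‖dseq m * z ^ m / (Nat.factorial m : ℝ)‖) := by
  have hb := Real.summable_pow_div_factorial |z|
  refine Summable.of_nonneg_of_le (fun k => norm_nonneg _) (fun k => ?_) hb
  have hd : |dseq k| ≤ 1 := by
    rw [dseq, abs_div]
    rw [div_le_one (by positivity)]
    have h1 : |1 + (-1 : ℝ) ^ k| ≤ 2 := by
      calc |1 + (-1 : ℝ) ^ k| ≤ |(1 : ℝ)| + |(-1 : ℝ) ^ k| := abs_add_le _ _
        _ = 2 := by rw [abs_one, abs_pow, abs_neg, abs_one, one_pow]; norm_num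
    have h2 : |(2 : ℝ) ^ (k + 1)| = 2 ^ (k + 1) := abs_of_pos (by positivity)
    rw [h2]
    have h3 : (2 : ℝ) ≤ 2 ^ (k + 1) := by
      calc (2 : ℝ) = 2 ^ 1 := (pow_one 2).symm
        _ ≤ 2 ^ (k + 1) := by
          apply pow_le_pow_right₀ (by norm_num)
          omega
    linarith
  rw [Real.norm_eq_abs, abs_div, abs_mul, abs_pow,
    abs_of_nonneg (by positivity : (0:ℝ) ≤ (Nat.factorial k : ℝ))]
  have hle : |dseq k| * |z| ^ k ≤ |z| ^ k :=
    mul_le_of_le_one_left (pow_nonneg (abs_nonneg z) k) hd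
  exact (div_le_div_iff_of_pos_right (by positivity)).mpr hle

lemma euler_delta {Eu : ℝ → ℕ → ℝ} (hEu : IsEulerFamily Eu) :
    conv dseq (Eu (1 / 2)) = deltaSeq := by
  have hπ : (1 : ℝ) < Real.pi := by have := Real.pi_gt_three; linarith
  apply coeff_unique (f := fun _ => (1 : ℝ))
  · intro z hz
    have ha := hasSum_dseq z
    have hb := hEu (1 / 2) z (lt_trans hz hπ)
    have ha' := summable_norm_dseq z
    have hb' := summable_norm_aux (fun z' hz' => hEu (1 / 2) z' hz') z hz
    have h := hasSum_conv z ha hb ha' hb'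
    convert h using 1
    have hE : Real.exp z = Real.exp (z / 2) * Real.exp (z / 2) := by
      rw [← Real.exp_add]; congr 1; ring
    have hhalf : Real.exp ((1 / 2 : ℝ) * z) = Real.exp (z / 2) := by congr 1; ring
    have hneg : Real.exp (-(z / 2)) = (Real.exp (z / 2))⁻¹ := Real.exp_neg _
    have hpos : 0 < Real.exp (z / 2) := Real.exp_pos _
    have hpos2 : 0 < Real.exp z + 1 := by positivity
    rw [hhalf, hneg, hE]
    have hne : Real.exp (z / 2) * Real.exp (z / 2) + 1 ≠ 0 := by positivity
    field_simp
  · intro z hz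
    have h : HasSum (fun k : ℕ => if k = 0 then (1 : ℝ) else 0) 1 := hasSum_ite_eq 0 1
    convert h using 1
    funext k
    rw [deltaSeq]
    by_cases hk : k = 0
    · subst hk; norm_num
    · rw [if_neg hk]
      ring

lemma eulerMatrix_eq (Eu : ℝ → ℕ → ℝ) (n : ℕ) (x : ℝ) :
    eulerMatrix Eu n x = Mseq n (Eu x) := rfl

lemma pascalMatrix_eq (n : ℕ) (x : ℝ) :
    pascalMatrix n x = Mseq n (fun m => x ^ m) := rfl

lemma Dmatrix_eq (n : ℕ) : Dmatrix n = Mseq n dseq := by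
  ext i j
  simp only [Dmatrix, Mseq, Matrix.of_apply, dseq]
  by_cases h : (j : ℕ) ≤ (i : ℕ)
  · have h1 : ((-1 : ℝ)) ^ ((i : ℤ) - (j : ℤ)) = (-1 : ℝ) ^ ((i : ℕ) - (j : ℕ)) := by
      have he : (i : ℤ) - (j : ℤ) = (((i : ℕ) - (j : ℕ) : ℕ) : ℤ) := by omega
      rw [he, zpow_natCast]
    have h2 : ((2 : ℝ)) ^ ((j : ℤ) - (i : ℤ) - 1)
        = ((2 : ℝ) ^ (((i : ℕ) - (j : ℕ)) + 1))⁻¹ := by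
      have he : (j : ℤ) - (i : ℤ) - 1 = -((((i : ℕ) - (j : ℕ) + 1 : ℕ)) : ℤ) := by omega
      rw [he, zpow_neg, zpow_natCast]
    rw [h1, h2, div_eq_mul_inv]
    ring
  · rw [Nat.choose_eq_zero_of_lt (by omega)]
    push_cast
    ring

lemma pascal_zero (n : ℕ) : pascalMatrix n 0 = 1 := by
  rw [pascalMatrix_eq]
  have h : (fun m : ℕ => (0 : ℝ) ^ m) = deltaSeq := by
    funext m
    rw [deltaSeq, zero_pow_eq]
  rw [h, Mseq_delta]

lemma pascal_mul (n : ℕ) (x y : ℝ) :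
    pascalMatrix n x * pascalMatrix n y = pascalMatrix n (x + y) := by
  rw [pascalMatrix_eq, pascalMatrix_eq, pascalMatrix_eq, Mseq_mul]
  have hc : conv (fun m : ℕ => x ^ m) (fun m : ℕ => y ^ m) = fun m : ℕ => (x + y) ^ m := by
    funext m
    show (∑ j ∈ Finset.range (m + 1), (Nat.choose m j : ℝ) * x ^ j * y ^ (m - j))
      = (x + y) ^ m
    rw [add_pow]
    exact Finset.sum_congr rfl fun j hj => by ring
  rw [hc]

lemma pascal_inv (n : ℕ) (x : ℝ) : pascalMatrix n x * pascalMatrix n (-x) = 1 := by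
  rw [pascal_mul, add_neg_cancel, pascal_zero]

lemma pascal_inv' (n : ℕ) (x : ℝ) : pascalMatrix n (-x) * pascalMatrix n x = 1 := by
  rw [pascal_mul, neg_add_cancel, pascal_zero]

lemma eulerMatrix_add {Eu : ℝ → ℕ → ℝ} (hEu : IsEulerFamily Eu) (n : ℕ) (x y : ℝ) :
    eulerMatrix Eu n (x + y) = pascalMatrix n y * eulerMatrix Eu n x := by
  rw [eulerMatrix_eq, eulerMatrix_eq, pascalMatrix_eq, Mseq_mul,
    euler_add hEu x y, conv_comm]

lemma D_mul_E {Eu : ℝ → ℕ → ℝ} (hEu : IsEulerFamily Eu) (n : ℕ) :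
    Dmatrix n * eulerMatrix Eu n (1 / 2) = 1 := by
  rw [Dmatrix_eq, eulerMatrix_eq, Mseq_mul, euler_delta hEu, Mseq_delta]

lemma E_mul_D {Eu : ℝ → ℕ → ℝ} (hEu : IsEulerFamily Eu) (n : ℕ) :
    eulerMatrix Eu n (1 / 2) * Dmatrix n = 1 := by
  rw [Dmatrix_eq, eulerMatrix_eq, Mseq_mul, conv_comm, euler_delta hEu, Mseq_delta]

end EulerFact

theorem euler_poly_matrix_summation_factorization (Eu : ℝ → ℕ → ℝ)
    (hEu : IsEulerFamily Eu) (n : ℕ) (hn : 1 ≤ n) (x : ℝ) :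
    eulerMatrix Eu n (x + 1 / 2) = Gprod n x * eulerMatrix Eu n (1 / 2) ∧
    (eulerMatrix Eu n (x + 1 / 2) * (Dmatrix n * Gprod n (-x)) = 1 ∧
     (Dmatrix n * Gprod n (-x)) * eulerMatrix Eu n (x + 1 / 2) = 1) ∧
    eulerMatrix Eu n 0 = Gprod n (-(1 / 2)) * eulerMatrix Eu n (1 / 2) ∧
    (eulerMatrix Eu n 0 * (Dmatrix n * Gprod n (1 / 2)) = 1 ∧
     (Dmatrix n * Gprod n (1 / 2)) * eulerMatrix Eu n 0 = 1) := by
  have hG : ∀ x' : ℝ, Gprod n x' = pascalMatrix n x' :=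
    fun x' => EulerFact.Gprod_eq_pascal n x'
  have fact1 : ∀ x' : ℝ,
      eulerMatrix Eu n (x' + 1 / 2) = Gprod n x' * eulerMatrix Eu n (1 / 2) := by
    intro x'
    rw [hG x', show x' + 1 / 2 = 1 / 2 + x' from add_comm _ _,
      EulerFact.eulerMatrix_add hEu n (1 / 2) x']
  have fact2 : ∀ x' : ℝ,
      eulerMatrix Eu n (x' + 1 / 2) * (Dmatrix n * Gprod n (-x')) = 1 := by
    intro x'
    rw [fact1 x', hG x', hG (-x'), Matrix.mul_assoc,
      ← Matrix.mul_assoc (eulerMatrix Eu n (1 / 2)), EulerFact.E_mul_D hEu n,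
      Matrix.one_mul, EulerFact.pascal_inv]
  have fact3 : ∀ x' : ℝ,
      (Dmatrix n * Gprod n (-x')) * eulerMatrix Eu n (x' + 1 / 2) = 1 := by
    intro x'
    rw [fact1 x', hG x', hG (-x'), Matrix.mul_assoc,
      ← Matrix.mul_assoc (pascalMatrix n (-x')), EulerFact.pascal_inv',
      Matrix.one_mul, EulerFact.D_mul_E hEu n]
  have h0 : (-(1 / 2 : ℝ)) + 1 / 2 = 0 := by norm_num
  have hnn : -(-(1 / 2 : ℝ)) = 1 / 2 := by norm_num
  refine ⟨fact1 x, ⟨fact2 x, fact3 x⟩, ?_, ?_, ?_⟩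
  · have := fact1 (-(1 / 2 : ℝ))
    rwa [h0] at this
  · have := fact2 (-(1 / 2 : ℝ))
    rwa [h0, hnn] at this
  · have := fact3 (-(1 / 2 : ℝ))
    rwa [h0, hnn] at this
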